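/- arXiv:1005.4492 — 2 statements merged into one kernel-verified Lean document; each statement's English description precedes it below -/
import Mathlib

section
/- Let D be a Steiner 2-design S(2,k,v) that contains a parallel class (a set of v/k pairwise disjoint blocks partitioning the point set), and let G_1 be its 1-block intersection graph, which is r-regular with r = k(v-k)/(k-1). If G_1 admits a silver coloring with respect to some maximum independent set, then k^2 divides v. -/
open Finset

variable {α : Type*}

/-- A Steiner 2-design `S(2,k,v)`: the point set has `v` points, every block has
`k` points, and every pair of distinct points lies in exactly one block. -/
def IsSteiner [Fintype α] [DecidableEq α] (v k : ℕ) (B : Finset (Finset α)) : Prop :=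
  Fintype.card α = v ∧ (∀ b ∈ B, b.card = k) ∧
    ∀ x y : α, x ≠ y → (B.filter fun b => x ∈ b ∧ y ∈ b).card = 1

/-- The `i`-block intersection graph: vertices are the blocks of `B`, two blocks
adjacent iff they intersect in exactly `i` points. -/
def BIG [DecidableEq α] (i : ℕ) (B : Finset (Finset α)) :
    SimpleGraph {b : Finset α // b ∈ B} where
  Adj b₁ b₂ := b₁ ≠ b₂ ∧ ((b₁ : Finset α) ∩ (b₂ : Finset α)).card = i
  symm := ⟨fun a b ⟨h1, h2⟩ => ⟨h1.symm, by rwa [Finset.inter_comm]⟩⟩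
  loopless := ⟨fun a ⟨h, _⟩ => h rfl⟩

instance [DecidableEq α] (i : ℕ) (B : Finset (Finset α)) :
    DecidableRel (BIG (α := α) i B).Adj := fun _ _ => inferInstanceAs (Decidable (_ ∧ _))

/-- `I` is a maximum independent set of `G`. -/
def IsMaxIndep {V : Type*} (G : SimpleGraph V) (I : Finset V) : Prop :=
  (∀ a ∈ I, ∀ b ∈ I, ¬ G.Adj a b) ∧
    ∀ J : Finset V, (∀ a ∈ J, ∀ b ∈ J, ¬ G.Adj a b) → J.card ≤ I.card

/-- A silver coloring of the `r`-regular graph `G` with respect to `I`: a proper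
`(r+1)`-coloring under which every vertex of `I` is rainbow (all `r+1` colors
appear on its closed neighborhood). -/
def SilverWith {V : Type*} (G : SimpleGraph V) (r : ℕ) (I : Finset V) : Prop :=
  ∃ c : V → Fin (r + 1), (∀ a b, G.Adj a b → c a ≠ c b) ∧
    ∀ x ∈ I, ∀ col : Fin (r + 1), ∃ y, (y = x ∨ G.Adj x y) ∧ c y = col

/-- `G` is silver: some silver coloring exists with respect to some maximum
independent set. -/
def IsSilver {V : Type*} (G : SimpleGraph V) (r : ℕ) : Prop :=
  ∃ I : Finset V, IsMaxIndep G I ∧ SilverWith G r I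

/-- A parallel class: pairwise disjoint blocks of `B` covering every point. -/
def IsParallelClass [DecidableEq α] (B P : Finset (Finset α)) : Prop :=
  P ⊆ B ∧ (∀ b₁ ∈ P, ∀ b₂ ∈ P, b₁ ≠ b₂ → b₁ ∩ b₂ = ∅) ∧ ∀ x : α, ∃ b ∈ P, x ∈ b

section lems
variable [Fintype α] [DecidableEq α] {v k : ℕ} {B : Finset (Finset α)}

lemma card_filter_subtype (B : Finset (Finset α)) (p : Finset α → Prop) [DecidablePred p] :
    (univ.filter (fun z : {b // b ∈ B} => p z.1)).card = (B.filter p).card := by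
  rw [Finset.univ_eq_attach, Finset.filter_attach, Finset.card_map, Finset.card_attach]

lemma steiner_unique_block (hD : IsSteiner v k B)
    {x y : α} (hxy : x ≠ y) : ∃! b, b ∈ B ∧ x ∈ b ∧ y ∈ b := by
  obtain ⟨b, hb⟩ := Finset.card_eq_one.mp (hD.2.2 x y hxy)
  refine ⟨b, ?_, ?_⟩
  · have : b ∈ B.filter fun b => x ∈ b ∧ y ∈ b := hb ▸ Finset.mem_singleton_self b
    simpa using this
  · intro c hc
    have : c ∈ B.filter fun b => x ∈ b ∧ y ∈ b := by
      simp [hc.1, hc.2.1, hc.2.2]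
    rw [hb] at this; simpa using this

lemma steiner_inter_le_one (hD : IsSteiner v k B) {b₁ b₂ : Finset α}
    (h1 : b₁ ∈ B) (h2 : b₂ ∈ B) (hne : b₁ ≠ b₂) : (b₁ ∩ b₂).card ≤ 1 := by
  by_contra h
  push_neg at h
  obtain ⟨x, hx, y, hy, hxy⟩ := Finset.one_lt_card.mp h
  simp only [Finset.mem_inter] at hx hy
  obtain ⟨b, -, hu⟩ := steiner_unique_block hD hxy
  exact hne ((hu b₁ ⟨h1, hx.1, hy.1⟩).trans (hu b₂ ⟨h2, hx.2, hy.2⟩).symm)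

/-- The unique block through two distinct points. -/
def blk (hD : IsSteiner v k B) {p q : α} (hpq : p ≠ q) : Finset α :=
  Finset.choose (fun y => p ∈ y ∧ q ∈ y) B (steiner_unique_block hD hpq)

lemma blk_mem (hD : IsSteiner v k B) {p q : α} (hpq : p ≠ q) : blk hD hpq ∈ B :=
  Finset.choose_mem _ _ _

lemma blk_left (hD : IsSteiner v k B) {p q : α} (hpq : p ≠ q) : p ∈ blk hD hpq :=
  (Finset.choose_property (fun y => p ∈ y ∧ q ∈ y) B (steiner_unique_block hD hpq)).1

lemma blk_right (hD : IsSteiner v k B) {p q : α} (hpq : p ≠ q) : q ∈ blk hD hpq :=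
  (Finset.choose_property (fun y => p ∈ y ∧ q ∈ y) B (steiner_unique_block hD hpq)).2

lemma blk_unique (hD : IsSteiner v k B) {p q : α} (hpq : p ≠ q) {y : Finset α}
    (hyB : y ∈ B) (hp : p ∈ y) (hq : q ∈ y) : y = blk hD hpq :=
  (steiner_unique_block hD hpq).unique ⟨hyB, hp, hq⟩
    ⟨blk_mem hD hpq, blk_left hD hpq, blk_right hD hpq⟩

/-- For `b ∈ B` and a point `q ∉ b`, exactly `k` blocks contain `q` and meet `b`
in exactly one point. -/
lemma steiner_count_through (hD : IsSteiner v k B) {b : Finset α} (hb : b ∈ B)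
    {q : α} (hq : q ∉ b) :
    (B.filter fun y => q ∈ y ∧ (y ∩ b).card = 1).card = b.card := by
  symm
  apply Finset.card_bij (fun p hp => blk hD (show p ≠ q from fun hh => hq (hh ▸ hp)))
  · intro p hp
    have hpq : p ≠ q := fun hh => hq (hh ▸ hp)
    have hyb : blk hD hpq ≠ b := fun hh => hq (hh ▸ blk_right hD hpq)
    have hle := steiner_inter_le_one hD (blk_mem hD hpq) hb hyb
    have hmem : p ∈ blk hD hpq ∩ b := Finset.mem_inter.mpr ⟨blk_left hD hpq, hp⟩
    exact Finset.mem_filter.mpr ⟨blk_mem hD hpq, blk_right hD hpq,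
      le_antisymm hle (Finset.card_pos.mpr ⟨p, hmem⟩)⟩
  · intro p₁ hp₁ p₂ hp₂ h
    have hpq₁ : p₁ ≠ q := fun hh => hq (hh ▸ hp₁)
    have hpq₂ : p₂ ≠ q := fun hh => hq (hh ▸ hp₂)
    have hyb : blk hD hpq₁ ≠ b := fun hh => hq (hh ▸ blk_right hD hpq₁)
    have hle := steiner_inter_le_one hD (blk_mem hD hpq₁) hb hyb
    have h1 : p₁ ∈ blk hD hpq₁ ∩ b := Finset.mem_inter.mpr ⟨blk_left hD hpq₁, hp₁⟩
    have h2 : p₂ ∈ blk hD hpq₁ ∩ b := by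
      have h' : blk hD hpq₁ = blk hD hpq₂ := h
      rw [h']; exact Finset.mem_inter.mpr ⟨blk_left hD hpq₂, hp₂⟩
    exact Finset.card_le_one.mp hle _ h1 _ h2
  · intro y hy
    rw [Finset.mem_filter] at hy
    obtain ⟨p, hp⟩ := Finset.card_eq_one.mp hy.2.2
    have hmem : p ∈ y ∩ b := hp ▸ Finset.mem_singleton_self p
    rw [Finset.mem_inter] at hmem
    refine ⟨p, hmem.2, ?_⟩
    exact (blk_unique hD _ hy.1 hmem.1 hy.2.1).symm

lemma sum_eq_card_forall_one {β : Type*} {s : Finset β} {f : β → ℕ}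
    (h1 : ∀ i ∈ s, 1 ≤ f i) (h2 : ∑ i ∈ s, f i = s.card) : ∀ i ∈ s, f i = 1 := by
  intro i hi
  by_contra h
  have hlt : ∑ j ∈ s, 1 < ∑ j ∈ s, f j :=
    Finset.sum_lt_sum h1 ⟨i, hi, by have := h1 i hi; omega⟩
  rw [Finset.sum_const, smul_eq_mul, mul_one] at hlt
  omega

/-- Degree counting: each block of `B` has exactly `k(v-k)/(k-1)` blocks meeting
it in one point. -/
lemma steiner_degree (hD : IsSteiner v k B) {b : Finset α} (hb : b ∈ B) :
    (B.filter fun y => y ≠ b ∧ (y ∩ b).card = 1).card * (k - 1) = (v - k) * k := by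
  set N := B.filter fun y => y ≠ b ∧ (y ∩ b).card = 1 with hN
  have hstep : ∀ y ∈ N, (y \ b).card = k - 1 := by
    intro y hy
    rw [hN, Finset.mem_filter] at hy
    have h := Finset.card_sdiff_add_card_inter y b
    rw [hy.2.2, hD.2.1 y hy.1] at h
    omega
  have h1 : ∑ y ∈ N, (y \ b).card = N.card * (k - 1) := by
    rw [Finset.sum_congr rfl hstep, Finset.sum_const, smul_eq_mul]
  have h2 : ∀ y ∈ N, (y \ b).card = ∑ q ∈ bᶜ, if q ∈ y then 1 else 0 := by
    intro y _
    rw [← Finset.card_filter]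
    congr 1
    ext a
    simp only [Finset.mem_sdiff, Finset.mem_filter, Finset.mem_compl]
    tauto
  have h3 : ∑ y ∈ N, (y \ b).card = ∑ q ∈ bᶜ, (N.filter fun y => q ∈ y).card := by
    rw [Finset.sum_congr rfl h2, Finset.sum_comm]
    exact Finset.sum_congr rfl fun q _ => (Finset.card_filter _ _).symm
  have h4 : ∀ q ∈ bᶜ, (N.filter fun y => q ∈ y).card = k := by
    intro q hq
    rw [Finset.mem_compl] at hq
    have he : N.filter (fun y => q ∈ y) = B.filter fun y => q ∈ y ∧ (y ∩ b).card = 1 := by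
      rw [hN, Finset.filter_filter]
      apply Finset.filter_congr
      intro y _
      constructor
      · rintro ⟨⟨-, hc⟩, hqy⟩; exact ⟨hqy, hc⟩
      · rintro ⟨hqy, hc⟩; exact ⟨⟨fun hh => hq (hh ▸ hqy), hc⟩, hqy⟩
    rw [he, steiner_count_through hD hb hq, hD.2.1 b hb]
  have h5 : ∑ q ∈ bᶜ, (N.filter fun y => q ∈ y).card = (v - k) * k := by
    rw [Finset.sum_congr rfl h4, Finset.sum_const, smul_eq_mul, Finset.card_compl,
      hD.2.1 b hb, hD.1]
  omega

end lems

/-- If an `S(2,k,v)` has a parallel class and its 1-block intersection graph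
(which is `k(v-k)/(k-1)`-regular) is silver, then `k² ∣ v`. -/
theorem stmt3 [Fintype α] [DecidableEq α] (v k : ℕ) (B : Finset (Finset α))
    (hk : 2 < k) (hkv : k < v) (hD : IsSteiner v k B)
    (hPC : ∃ P : Finset (Finset α), IsParallelClass B P)
    (hsilver : IsSilver (BIG 1 B) (k * (v - k) / (k - 1))) :
    k ^ 2 ∣ v := by
  classical
  set r := k * (v - k) / (k - 1) with hr
  set G := BIG 1 B with hG
  obtain ⟨P, hPB, hPdisj, hPcov⟩ := hPC
  obtain ⟨I, ⟨hIindep, hImax⟩, c, hproper, hrainbow⟩ := hsilver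
  -- P has cardinality v / k
  have hPcard : P.card * k = v := by
    have hcov : P.biUnion id = Finset.univ := by
      apply Finset.eq_univ_of_forall
      intro q
      obtain ⟨b, hb, hqb⟩ := hPcov q
      exact Finset.mem_biUnion.mpr ⟨b, hb, hqb⟩
    have hdisj : ∀ b₁ ∈ P, ∀ b₂ ∈ P, b₁ ≠ b₂ → Disjoint (id b₁) (id b₂) := by
      intro b₁ h1 b₂ h2 hne
      rw [Finset.disjoint_iff_inter_eq_empty]
      exact hPdisj b₁ h1 b₂ h2 hne
    have hbu := Finset.card_biUnion hdisj
    rw [hcov, Finset.card_univ, hD.1] at hbu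
    simp only [id_eq] at hbu
    have hsum : ∑ u ∈ P, u.card = P.card * k := by
      rw [Finset.sum_congr rfl (fun b hb => hD.2.1 b (hPB hb)), Finset.sum_const, smul_eq_mul]
    omega
  -- I is a family of pairwise disjoint blocks
  have hIdisj : ∀ x ∈ I, ∀ y ∈ I, x ≠ y → Disjoint (x : Finset α) (y : Finset α) := by
    intro x hx y hy hne
    have hnadj := hIindep x hx y hy
    rw [hG] at hnadj
    have hle := steiner_inter_le_one hD x.2 y.2 (fun h => hne (Subtype.ext h))
    have hne1 : ((x : Finset α) ∩ (y : Finset α)).card ≠ 1 := fun h1 => hnadj ⟨hne, h1⟩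
    rw [Finset.disjoint_iff_inter_eq_empty, ← Finset.card_eq_zero]
    omega
  -- P lifts to an independent set of the same cardinality
  have hPble : P.card ≤ I.card := by
    refine hImax (Finset.univ.filter fun z : {b // b ∈ B} => z.1 ∈ P) ?_ |>.trans_eq' ?_
    · intro a ha b hb hadj
      rw [Finset.mem_filter] at ha hb
      rw [hG] at hadj
      obtain ⟨hne, hone⟩ := hadj
      have := hPdisj a.1 ha.2 b.1 hb.2 (fun h => hne (Subtype.ext h))
      rw [this] at hone
      simp at hone
    · rw [card_filter_subtype B (· ∈ P), Finset.filter_mem_eq_inter,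
        Finset.inter_eq_right.mpr hPB]
  have hIbU : (I.biUnion fun z => (z : Finset α)).card = I.card * k := by
    rw [Finset.card_biUnion hIdisj, Finset.sum_congr rfl fun x hx => hD.2.1 x.1 x.2,
      Finset.sum_const, smul_eq_mul]
  have hIle : I.card * k ≤ v := by
    rw [← hIbU, ← hD.1, ← Finset.card_univ]
    exact Finset.card_le_univ _
  have hIcard : I.card * k = v := by
    have h2 : I.card * k ≤ P.card * k := by rw [hPcard]; exact hIle
    have h3 : I.card ≤ P.card := Nat.le_of_mul_le_mul_right h2 (by omega)
    rw [le_antisymm h3 hPble, hPcard]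
  have hm2 : 2 ≤ I.card := by
    rcases Nat.lt_or_ge I.card 2 with h | h
    · exfalso
      have h0 : I.card * k ≤ 1 * k := Nat.mul_le_mul_right k (by omega)
      omega
    · exact h
  -- I covers every point
  have hIcov : ∀ q : α, ∃ x ∈ I, q ∈ (x : Finset α) := by
    have huniv : (I.biUnion fun z => (z : Finset α)) = Finset.univ := by
      apply Finset.eq_univ_of_card
      rw [hIbU, hIcard, hD.1]
    intro q
    have hq : q ∈ I.biUnion fun z => (z : Finset α) := huniv ▸ Finset.mem_univ q
    exact Finset.mem_biUnion.mp hq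
  -- unique I-block through each point
  have hIuniq : ∀ q : α, ∃! x, x ∈ I ∧ q ∈ (x : Finset α) := by
    intro q
    obtain ⟨x, hx, hqx⟩ := hIcov q
    refine ⟨x, ⟨hx, hqx⟩, fun y hy => ?_⟩
    by_contra hne
    exact (Finset.disjoint_left.mp (hIdisj y hy.1 x hx hne)) hy.2 hqx
  -- a block outside I meets exactly k blocks of I in one point
  have hL7 : ∀ z : {b // b ∈ B}, z ∉ I →
      (I.filter fun x : {b // b ∈ B} => ((z : Finset α) ∩ (x : Finset α)).card = 1).card = k := by
    intro z hz
    rw [← hD.2.1 z.1 z.2]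
    symm
    apply Finset.card_bij (fun q hq =>
      Finset.choose (fun x : {b // b ∈ B} => q ∈ (x : Finset α)) I (hIuniq q))
    · intro q hq
      have hxI : Finset.choose (fun x : {b // b ∈ B} => q ∈ (x : Finset α)) I (hIuniq q) ∈ I :=
        Finset.choose_mem _ _ _
      have hqx : q ∈ (Finset.choose (fun x : {b // b ∈ B} => q ∈ (x : Finset α)) I
          (hIuniq q)).val :=
        Finset.choose_property (fun x : {b // b ∈ B} => q ∈ (x : Finset α)) I (hIuniq q)
      set x := Finset.choose (fun x : {b // b ∈ B} => q ∈ (x : Finset α)) I (hIuniq q)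
      have hne : (z : Finset α) ≠ (x : Finset α) :=
        fun h => hz ((Subtype.ext h : z = x) ▸ hxI)
      have hle := steiner_inter_le_one hD z.2 x.2 hne
      have hmem : q ∈ (z : Finset α) ∩ (x : Finset α) := Finset.mem_inter.mpr ⟨hq, hqx⟩
      exact Finset.mem_filter.mpr ⟨hxI, le_antisymm hle (Finset.card_pos.mpr ⟨q, hmem⟩)⟩
    · intro q₁ hq₁ q₂ hq₂ h
      have hqx₁ : q₁ ∈ (Finset.choose (fun x : {b // b ∈ B} => q₁ ∈ (x : Finset α)) I
          (hIuniq q₁)).val :=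
        Finset.choose_property (fun x : {b // b ∈ B} => q₁ ∈ (x : Finset α)) I (hIuniq q₁)
      have hqx₂ : q₂ ∈ (Finset.choose (fun x : {b // b ∈ B} => q₁ ∈ (x : Finset α)) I
          (hIuniq q₁)).val := by
        rw [h]
        exact Finset.choose_property (fun x : {b // b ∈ B} => q₂ ∈ (x : Finset α)) I (hIuniq q₂)
      have hxI : Finset.choose (fun x : {b // b ∈ B} => q₁ ∈ (x : Finset α)) I (hIuniq q₁) ∈ I :=
        Finset.choose_mem _ _ _
      set x := Finset.choose (fun x : {b // b ∈ B} => q₁ ∈ (x : Finset α)) I (hIuniq q₁)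
      have hne : (z : Finset α) ≠ (x : Finset α) :=
        fun hh => hz ((Subtype.ext hh : z = x) ▸ hxI)
      have hle := steiner_inter_le_one hD z.2 x.2 hne
      exact Finset.card_le_one.mp hle _ (Finset.mem_inter.mpr ⟨hq₁, hqx₁⟩) _
        (Finset.mem_inter.mpr ⟨hq₂, hqx₂⟩)
    · intro x hx
      rw [Finset.mem_filter] at hx
      obtain ⟨q, hq⟩ := Finset.card_eq_one.mp hx.2
      have hmem : q ∈ (z : Finset α) ∩ (x : Finset α) := hq ▸ Finset.mem_singleton_self q
      rw [Finset.mem_inter] at hmem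
      refine ⟨q, hmem.1, ?_⟩
      exact (hIuniq q).unique ⟨Finset.choose_mem _ _ _,
        Finset.choose_property (fun x : {b // b ∈ B} => q ∈ (x : Finset α)) I (hIuniq q)⟩
        ⟨hx.1, hmem.2⟩
  -- every block has degree r
  have hdeg : ∀ x : {b // b ∈ B},
      (Finset.univ.filter fun z => G.Adj x z).card = r := by
    intro x
    have he : (Finset.univ.filter fun z => G.Adj x z) =
        Finset.univ.filter fun z : {b // b ∈ B} =>
          (z : Finset α) ≠ (x : Finset α) ∧ ((z : Finset α) ∩ (x : Finset α)).card = 1 := by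
      apply Finset.filter_congr
      intro z _
      rw [hG]
      constructor
      · rintro ⟨hne, hone⟩
        exact ⟨fun h => hne (Subtype.ext h.symm), by rwa [Finset.inter_comm]⟩
      · rintro ⟨hne, hone⟩
        exact ⟨fun h => hne (congrArg Subtype.val h.symm), by rwa [Finset.inter_comm]⟩
    rw [he, card_filter_subtype B (fun y => y ≠ (x : Finset α) ∧ (y ∩ (x : Finset α)).card = 1)]
    have hcount := steiner_degree hD x.2
    rw [hr]
    symm
    apply Nat.div_eq_of_eq_mul_left (by omega : 0 < k - 1)
    rw [mul_comm (v - k) k] at hcount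
    omega
  -- closed neighborhoods have r + 1 elements
  have hclosed : ∀ x : {b // b ∈ B},
      (Finset.univ.filter fun z => z = x ∨ G.Adj x z).card = r + 1 := by
    intro x
    have he : (Finset.univ.filter fun z => z = x ∨ G.Adj x z) =
        insert x (Finset.univ.filter fun z => G.Adj x z) := by
      ext z
      simp only [Finset.mem_filter, Finset.mem_univ, true_and, Finset.mem_insert]
    rw [he, Finset.card_insert_of_notMem
      (fun hmem => G.loopless.irrefl x (Finset.mem_filter.mp hmem).2), hdeg x]
  -- in each closed neighborhood of a vertex of I, each color appears exactly once
  have hexact : ∀ x ∈ I, ∀ col : Fin (r + 1),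
      ((Finset.univ.filter fun z => z = x ∨ G.Adj x z).filter fun z => c z = col).card = 1 := by
    intro x hx
    set Nx := Finset.univ.filter fun z => z = x ∨ G.Adj x z with hNx
    have hsum : ∑ col : Fin (r + 1), (Nx.filter fun z => c z = col).card = Nx.card :=
      (Finset.card_eq_sum_card_fiberwise fun z _ => Finset.mem_univ (c z)).symm
    have hge : ∀ col ∈ (Finset.univ : Finset (Fin (r + 1))),
        1 ≤ (Nx.filter fun z => c z = col).card := by
      intro col _
      obtain ⟨y, hy1, hy2⟩ := hrainbow x hx col
      exact Finset.card_pos.mpr ⟨y, Finset.mem_filter.mpr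
        ⟨Finset.mem_filter.mpr ⟨Finset.mem_univ y, hy1⟩, hy2⟩⟩
    have hall := sum_eq_card_forall_one hge (by
      rw [hsum, hclosed x, Finset.card_univ, Fintype.card_fin])
    intro col
    exact hall col (Finset.mem_univ col)
  -- the per-color double count
  have hcount : ∀ col : Fin (r + 1), ∃ bc : ℕ,
      I.card = (I.filter fun z => c z = col).card + k * bc := by
    intro col
    set A := Finset.univ.filter fun z : {b // b ∈ B} => c z = col with hA
    have h1 : ∑ x ∈ I, ((Finset.univ.filter fun z => z = x ∨ G.Adj x z).filter
        fun z => c z = col).card = I.card := by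
      rw [Finset.sum_congr rfl fun x hx => hexact x hx col, Finset.sum_const,
        smul_eq_mul, mul_one]
    have h2 : ∀ x : {b // b ∈ B}, ((Finset.univ.filter fun z => z = x ∨ G.Adj x z).filter
        fun z => c z = col) = A.filter fun z => z = x ∨ G.Adj x z := by
      intro x
      rw [hA, Finset.filter_filter, Finset.filter_filter]
      exact Finset.filter_congr fun z _ => by tauto
    have h3 : ∑ x ∈ I, (A.filter fun z => z = x ∨ G.Adj x z).card
        = ∑ z ∈ A, (I.filter fun x => z = x ∨ G.Adj x z).card := by
      simp only [Finset.card_filter]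
      rw [Finset.sum_comm]
    have h4 : ∑ z ∈ A, (I.filter fun x => z = x ∨ G.Adj x z).card
        = ∑ z ∈ A.filter (· ∈ I), (I.filter fun x => z = x ∨ G.Adj x z).card
          + ∑ z ∈ A.filter (· ∉ I), (I.filter fun x => z = x ∨ G.Adj x z).card :=
      (Finset.sum_filter_add_sum_filter_not A _ _).symm
    have h5 : ∀ z ∈ A.filter (· ∈ I), (I.filter fun x => z = x ∨ G.Adj x z).card = 1 := by
      intro z hz
      rw [Finset.mem_filter] at hz
      have hsing : (I.filter fun x => z = x ∨ G.Adj x z) = {z} := by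
        ext x
        simp only [Finset.mem_filter, Finset.mem_singleton]
        constructor
        · rintro ⟨hxI, h | h⟩
          · exact h.symm
          · exact absurd h (hIindep x hxI z hz.2)
        · rintro rfl
          exact ⟨hz.2, Or.inl rfl⟩
      rw [hsing, Finset.card_singleton]
    have h6 : ∀ z ∈ A.filter (· ∉ I), (I.filter fun x => z = x ∨ G.Adj x z).card = k := by
      intro z hz
      rw [Finset.mem_filter] at hz
      have he : (I.filter fun x => z = x ∨ G.Adj x z)
          = I.filter fun x : {b // b ∈ B} => ((z : Finset α) ∩ (x : Finset α)).card = 1 := by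
        apply Finset.filter_congr
        intro x hxI
        constructor
        · rintro (h | h)
          · exact absurd (h ▸ hxI) hz.2
          · rw [hG] at h
            rw [Finset.inter_comm]
            exact h.2
        · intro h
          refine Or.inr ?_
          rw [hG]
          exact ⟨fun hh => hz.2 (hh ▸ hxI), by rwa [Finset.inter_comm]⟩
      rw [he, hL7 z hz.2]
    refine ⟨(A.filter (· ∉ I)).card, ?_⟩
    have hAI : A.filter (· ∈ I) = I.filter fun z => c z = col := by
      rw [hA, Finset.filter_filter]
      ext z
      simp only [Finset.mem_filter, Finset.mem_univ, true_and]
      tauto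
    calc I.card = ∑ x ∈ I, ((Finset.univ.filter fun z => z = x ∨ G.Adj x z).filter
          fun z => c z = col).card := h1.symm
      _ = ∑ x ∈ I, (A.filter fun z => z = x ∨ G.Adj x z).card :=
          Finset.sum_congr rfl fun x _ => by rw [h2]
      _ = ∑ z ∈ A, (I.filter fun x => z = x ∨ G.Adj x z).card := h3
      _ = ∑ z ∈ A.filter (· ∈ I), (I.filter fun x => z = x ∨ G.Adj x z).card
          + ∑ z ∈ A.filter (· ∉ I), (I.filter fun x => z = x ∨ G.Adj x z).card := h4
      _ = (A.filter (· ∈ I)).card * 1 + (A.filter (· ∉ I)).card * k := by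
          rw [Finset.sum_congr rfl h5, Finset.sum_congr rfl h6, Finset.sum_const,
            Finset.sum_const, smul_eq_mul, smul_eq_mul]
      _ = (I.filter fun z => c z = col).card + k * (A.filter (· ∉ I)).card := by
          rw [hAI, mul_one, mul_comm]
  -- sum of the color counts inside I
  have hsumI : ∑ col : Fin (r + 1), (I.filter fun z => c z = col).card = I.card :=
    (Finset.card_eq_sum_card_fiberwise fun z _ => Finset.mem_univ (c z)).symm
  -- r is large : I.card + 1 ≤ r
  have hrm : I.card + 1 ≤ r := by
    obtain ⟨x, hxI⟩ := Finset.card_pos.mp (by omega : 0 < I.card)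
    have h1 := hdeg x
    have h2 := steiner_degree hD x.2
    have h3 : (Finset.univ.filter fun z => G.Adj x z).card =
        (B.filter fun y => y ≠ (x : Finset α) ∧ (y ∩ (x : Finset α)).card = 1).card := by
      rw [← card_filter_subtype B
        (fun y => y ≠ (x : Finset α) ∧ (y ∩ (x : Finset α)).card = 1)]
      apply congrArg
      apply Finset.filter_congr
      intro z _
      rw [hG]
      constructor
      · rintro ⟨hne, hone⟩
        exact ⟨fun h => hne (Subtype.ext h.symm), by rwa [Finset.inter_comm]⟩
      · rintro ⟨hne, hone⟩
        exact ⟨fun h => hne (congrArg Subtype.val h.symm), by rwa [Finset.inter_comm]⟩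
    have hrk : r * (k - 1) = (v - k) * k := by rw [← h1, h3]; exact h2
    obtain ⟨a', ha'⟩ : ∃ a', I.card = a' + 2 := ⟨I.card - 2, by omega⟩
    obtain ⟨e, he⟩ : ∃ e, k = e + 3 := ⟨k - 3, by omega⟩
    have hvk : v - k = (a' + 1) * (e + 3) := by
      have h4 : v = (a' + 2) * (e + 3) := by rw [← hIcard, ha', he]
      rw [h4]
      have : (a' + 2) * (e + 3) = (a' + 1) * (e + 3) + (e + 3) := by ring
      omega
    rw [hvk, he] at hrk
    have hk1 : (e + 3) - 1 = e + 2 := by omega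
    rw [hk1] at hrk
    have hmain : (a' + 3) * (e + 2) ≤ r * (e + 2) := by
      rw [hrk]
      nlinarith
    have := Nat.le_of_mul_le_mul_right hmain (by omega : 0 < e + 2)
    omega
  -- finish : k ∣ I.card
  have hmod : k ∣ I.card := by
    by_contra hnd
    have hmm : 1 ≤ I.card % k := by
      rcases Nat.eq_zero_or_pos (I.card % k) with h | h
      · exact absurd (Nat.dvd_of_mod_eq_zero h) hnd
      · exact h
    have hge : ∀ col : Fin (r + 1), I.card % k ≤ (I.filter fun z => c z = col).card := by
      intro col
      obtain ⟨bc, hbc⟩ := hcount col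
      have hmodeq : (I.filter fun z => c z = col).card % k = I.card % k := by
        rw [hbc, Nat.add_mul_mod_self_left]
      have h2 : (I.filter fun z => c z = col).card % k ≤ (I.filter fun z => c z = col).card :=
        Nat.mod_le _ _
      omega
    have hbig : (r + 1) * (I.card % k) ≤ I.card := by
      calc (r + 1) * (I.card % k) = ∑ _col : Fin (r + 1), I.card % k := by
            rw [Finset.sum_const, Finset.card_univ, Fintype.card_fin, smul_eq_mul]
        _ ≤ ∑ col : Fin (r + 1), (I.filter fun z => c z = col).card :=
            Finset.sum_le_sum fun col _ => hge col
        _ = I.card := hsumI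
    have h1 : (r + 1) * 1 ≤ (r + 1) * (I.card % k) := Nat.mul_le_mul_left _ hmm
    omega
  obtain ⟨t, ht⟩ := hmod
  exact ⟨t, by rw [← hIcard, ht]; ring⟩
end

section
/- Let D be a Steiner 2-design S(2,k,v) with a near parallel class. Then the 1-block intersection graph G_1 of D is not silver: for every maximum independent set I of G_1 (necessarily a near parallel class of size (v-1)/k), there is no proper (r+1)-coloring of G_1, where r = k(v-k)/(k-1), in which every vertex of I is rainbow. -/
open Finset

variable {α : Type*}

/-- A near parallel class: pairwise disjoint blocks of `B` covering every point
except exactly one. -/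
def IsNearParallelClass [DecidableEq α] (B P : Finset (Finset α)) : Prop :=
  P ⊆ B ∧ (∀ b₁ ∈ P, ∀ b₂ ∈ P, b₁ ≠ b₂ → b₁ ∩ b₂ = ∅) ∧
    ∃ x : α, ∀ y : α, (∃ b ∈ P, y ∈ b) ↔ y ≠ x


lemma aux_sum_card_filter_comm {β γ : Type*} [DecidableEq β] [DecidableEq γ]
    (A : Finset β) (Bs : Finset γ) (p : β → γ → Prop) [∀ a b, Decidable (p a b)] :
    ∑ a ∈ A, (Bs.filter (fun y => p a y)).card = ∑ y ∈ Bs, (A.filter (fun a => p a y)).card := by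
  simp only [Finset.card_filter]
  exact Finset.sum_comm

lemma aux_all_one {ι : Type*} (F : Finset ι) (f : ι → ℕ) (h1 : ∀ i ∈ F, 1 ≤ f i)
    (hs : ∑ i ∈ F, f i = F.card) : ∀ i ∈ F, f i = 1 := by
  intro i hi
  by_contra h
  have hlt : F.card < ∑ i ∈ F, f i := by
    calc F.card = ∑ _i ∈ F, 1 := by simp
    _ < ∑ i ∈ F, f i := Finset.sum_lt_sum h1 ⟨i, hi, by have := h1 i hi; omega⟩
  omega

lemma aux_arith (n s k : ℕ) (hk : 2 < k) (hn2 : 2 ≤ n) (hs1 : 1 ≤ s)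
    (hnks : s * (k - 1) = n * k) : n + s ≤ k * (s - 1) := by
  obtain ⟨s', rfl⟩ : ∃ s', s = s' + 1 := ⟨s - 1, by omega⟩
  obtain ⟨k', rfl⟩ : ∃ k', k = k' + 3 := ⟨k - 3, by omega⟩
  have hA : s' * (k' + 2) + (k' + 2) = n * (k' + 3) := by
    have h := hnks
    rw [show k' + 3 - 1 = k' + 2 from rfl] at h
    calc s' * (k' + 2) + (k' + 2) = (s' + 1) * (k' + 2) := by ring
    _ = n * (k' + 3) := h
  have hB : 2 * k' ≤ n * k' := Nat.mul_le_mul_right k' hn2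
  have he : (k' + 3) * ((s' + 1) - 1) = (k' + 3) * s' := rfl
  rw [he]
  nlinarith [hA, hB, hn2]

/-- The 1-block intersection graph of an `S(2,k,v)` with a near parallel class
is not silver. -/
theorem stmt6 [Fintype α] [DecidableEq α] (v k : ℕ) (B : Finset (Finset α))
    (hk : 2 < k) (hkv : k < v) (hD : IsSteiner v k B)
    (hNPC : ∃ P : Finset (Finset α), IsNearParallelClass B P) :
    ¬ IsSilver (BIG 1 B) (k * (v - k) / (k - 1)) := by
  classical
  set R := k * (v - k) / (k - 1) with hRdef
  obtain ⟨hcard, hblk, hpair⟩ := hD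
  obtain ⟨P, hPB, hPdis, x₁, hx₁⟩ := hNPC
  rintro ⟨I, ⟨hIind, hImax⟩, c, hcprop, hcrain⟩
  have hbigadj : ∀ a b : {b : Finset α // b ∈ B},
      (BIG 1 B).Adj a b ↔ a ≠ b ∧ ((a : Finset α) ∩ (b : Finset α)).card = 1 := fun a b => Iff.rfl
  have hle1 : ∀ b₁ ∈ B, ∀ b₂ ∈ B, b₁ ≠ b₂ → (b₁ ∩ b₂).card ≤ 1 := by
    intro b₁ h₁ b₂ h₂ hne
    by_contra h
    push_neg at h
    obtain ⟨x, hx, y, hy, hxy⟩ := Finset.one_lt_card.mp h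
    simp only [Finset.mem_inter] at hx hy
    have hsub : {b₁, b₂} ⊆ B.filter (fun b => x ∈ b ∧ y ∈ b) := by
      intro b hb
      simp only [Finset.mem_insert, Finset.mem_singleton] at hb
      rcases hb with rfl | rfl <;> simp [Finset.mem_filter, h₁, h₂, hx.1, hx.2, hy.1, hy.2]
    have h2 : 2 ≤ (B.filter fun b => x ∈ b ∧ y ∈ b).card := by
      calc 2 = ({b₁, b₂} : Finset (Finset α)).card := (Finset.card_pair hne).symm
      _ ≤ _ := Finset.card_le_card hsub
    rw [hpair x y hxy] at h2
    omega
  have hrep : ∀ x : α, (B.filter fun b => x ∈ b).card * (k - 1) = v - 1 := by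
    intro x
    have hdisj : ∀ b₁ ∈ B.filter (fun b => x ∈ b), ∀ b₂ ∈ B.filter (fun b => x ∈ b),
        b₁ ≠ b₂ → Disjoint (b₁.erase x) (b₂.erase x) := by
      intro b₁ h₁ b₂ h₂ hne
      simp only [Finset.mem_filter] at h₁ h₂
      rw [Finset.disjoint_left]
      intro z hz₁ hz₂
      have hzx : z ≠ x := Finset.ne_of_mem_erase hz₁
      have hlt : 1 < (b₁ ∩ b₂).card := Finset.one_lt_card.mpr
        ⟨x, by simp [h₁.2, h₂.2], z,
          by simp [Finset.mem_of_mem_erase hz₁, Finset.mem_of_mem_erase hz₂], Ne.symm hzx⟩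
      have := hle1 b₁ h₁.1 b₂ h₂.1 hne
      omega
    have hun : (B.filter (fun b => x ∈ b)).biUnion (fun b => b.erase x) = Finset.univ.erase x := by
      ext z
      simp only [Finset.mem_biUnion, Finset.mem_erase, Finset.mem_univ, and_true,
        Finset.mem_filter]
      constructor
      · rintro ⟨b, hb, hz, _⟩
        exact hz
      · intro hz
        have h1 := hpair x z (Ne.symm hz)
        have hne : (B.filter fun b => x ∈ b ∧ z ∈ b).Nonempty := Finset.card_pos.mp (by omega)
        obtain ⟨b, hb⟩ := hne
        simp only [Finset.mem_filter] at hb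
        exact ⟨b, ⟨hb.1, hb.2.1⟩, hz, hb.2.2⟩
    have h2 := Finset.card_biUnion hdisj
    rw [hun] at h2
    have h3 : (Finset.univ.erase x).card = v - 1 := by
      rw [Finset.card_erase_of_mem (Finset.mem_univ x), Finset.card_univ, hcard]
    have h4 : ∀ b ∈ B.filter (fun b => x ∈ b), (b.erase x).card = k - 1 := by
      intro b hb
      simp only [Finset.mem_filter] at hb
      rw [Finset.card_erase_of_mem hb.2, hblk b hb.1]
    rw [Finset.sum_congr rfl h4, Finset.sum_const, smul_eq_mul] at h2
    omega
  -- near parallel class count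
  have hPcard : P.card * k = v - 1 := by
    have hdisj : ∀ b₁ ∈ P, ∀ b₂ ∈ P, b₁ ≠ b₂ → Disjoint b₁ b₂ := by
      intro b₁ h₁ b₂ h₂ hne
      rw [Finset.disjoint_iff_inter_eq_empty]
      exact hPdis b₁ h₁ b₂ h₂ hne
    have hun : P.biUnion (fun b => b) = Finset.univ.erase x₁ := by
      ext z
      simp only [Finset.mem_biUnion, Finset.mem_erase, Finset.mem_univ, and_true]
      rw [← hx₁ z]
    have h2 := Finset.card_biUnion hdisj
    rw [hun] at h2
    have h3 : (Finset.univ.erase x₁).card = v - 1 := by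
      rw [Finset.card_erase_of_mem (Finset.mem_univ x₁), Finset.card_univ, hcard]
    have h4 : ∀ b ∈ P, b.card = k := fun b hb => hblk b (hPB hb)
    rw [Finset.sum_congr rfl h4, Finset.sum_const, smul_eq_mul] at h2
    omega
  set n := P.card with hn
  -- I consists of pairwise disjoint blocks
  have hIdisj : ∀ b₁ ∈ I, ∀ b₂ ∈ I, b₁ ≠ b₂ →
      ((b₁ : {b : Finset α // b ∈ B}) : Finset α) ∩ (b₂ : Finset α) = ∅ := by
    intro b₁ h₁ b₂ h₂ hne
    have hne' : (b₁ : Finset α) ≠ (b₂ : Finset α) := fun h => hne (Subtype.ext h)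
    have h1 := hle1 b₁ b₁.2 b₂ b₂.2 hne'
    have h2 := hIind b₁ h₁ b₂ h₂
    rw [hbigadj] at h2
    have h3 : ((b₁ : Finset α) ∩ (b₂ : Finset α)).card ≠ 1 := fun hc => h2 ⟨hne, hc⟩
    rw [← Finset.card_eq_zero]
    omega
  -- lower bound on |I|
  have hPI : n ≤ I.card := by
    have h0 : (P.subtype (· ∈ B)).card = n := by
      rw [Finset.card_subtype, Finset.filter_true_of_mem (fun b hb => hPB hb)]
    rw [← h0]
    apply hImax
    intro a ha b hb hadj
    rw [Finset.mem_subtype] at ha hb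
    rw [hbigadj] at hadj
    obtain ⟨hne, hc⟩ := hadj
    have hne' : (a : Finset α) ≠ (b : Finset α) := fun h => hne (Subtype.ext h)
    rw [hPdis a ha b hb hne'] at hc
    simp at hc
  -- covered set
  set C := I.biUnion (fun b => (b : Finset α)) with hCdef
  have hCcard : C.card = I.card * k := by
    rw [hCdef, Finset.card_biUnion (fun b₁ h₁ b₂ h₂ hne =>
      Finset.disjoint_iff_inter_eq_empty.mpr (hIdisj b₁ h₁ b₂ h₂ hne))]
    rw [Finset.sum_congr rfl (fun b (hb : b ∈ I) => hblk (b : Finset α) b.2),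
      Finset.sum_const, smul_eq_mul]
  have hIub : I.card * k ≤ v := by
    rw [← hCcard, ← hcard, ← Finset.card_univ]
    exact Finset.card_le_card (Finset.subset_univ C)
  have hIn : I.card = n := by
    by_contra h
    have h1 : n + 1 ≤ I.card := by omega
    have h2 : (n + 1) * k ≤ I.card * k := Nat.mul_le_mul_right k h1
    have h3 : (n + 1) * k = n * k + k := by ring
    omega
  have hCv : C.card = v - 1 := by rw [hCcard, hIn, hPcard]
  obtain ⟨x₀, hcovC⟩ : ∃ x₀ : α, ∀ z : α, z ∈ C ↔ z ≠ x₀ := by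
    have h1 : (Finset.univ \ C).card = 1 := by
      rw [Finset.card_sdiff_of_subset (Finset.subset_univ C), Finset.card_univ, hcard, hCv]
      omega
    obtain ⟨x₀, hx₀⟩ := Finset.card_eq_one.mp h1
    refine ⟨x₀, fun z => ?_⟩
    constructor
    · rintro hz rfl
      have : z ∈ Finset.univ \ C := hx₀ ▸ Finset.mem_singleton_self z
      exact (Finset.mem_sdiff.mp this).2 hz
    · intro hz
      by_contra hzc
      have : z ∈ Finset.univ \ C := Finset.mem_sdiff.mpr ⟨Finset.mem_univ z, hzc⟩
      rw [hx₀, Finset.mem_singleton] at this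
      exact hz this
  have hcov : ∀ z : α, (∃ b ∈ I, z ∈ (b : Finset α)) ↔ z ≠ x₀ := by
    intro z
    rw [← hcovC z, hCdef]
    simp [Finset.mem_biUnion]
  obtain ⟨s, hsdef⟩ : ∃ s, (B.filter fun b => x₀ ∈ b).card = s := ⟨_, rfl⟩
  have hs : s * (k - 1) = v - 1 := by rw [← hsdef]; exact hrep x₀
  have hsall : ∀ x : α, (B.filter fun b => x ∈ b).card = s := by
    intro x
    have h1 := hrep x
    have hk1 : 0 < k - 1 := by omega
    exact Nat.eq_of_mul_eq_mul_right hk1 (by rw [h1, hs])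
  have hs1 : 1 ≤ s := by
    by_contra h
    have h0 : s = 0 := by omega
    rw [h0, Nat.zero_mul] at hs
    omega
  have hn2 : 2 ≤ n := by
    by_contra h
    push_neg at h
    have hv1 : n * k ≤ 1 * k := Nat.mul_le_mul_right k (by omega)
    have hsk : s * (k - 1) = k := by omega
    rcases Nat.lt_or_ge s 2 with h2 | h2
    · have : s * (k - 1) ≤ 1 * (k - 1) := Nat.mul_le_mul_right _ (by omega)
      omega
    · have : 2 * (k - 1) ≤ s * (k - 1) := Nat.mul_le_mul_right _ h2
      omega
  have hsn : n < s := by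
    by_contra h
    push_neg at h
    have h1 : s * (k - 1) ≤ n * (k - 1) := Nat.mul_le_mul_right _ h
    have h2 : n * (k - 1) < n * k := Nat.mul_lt_mul_of_pos_left (by omega) (by omega)
    omega
  -- evaluate r
  have hr : R = k * (s - 1) := by
    rw [hRdef]
    have hm : (s - 1) * (k - 1) + (k - 1) = v - 1 := by
      have h1 : s - 1 + 1 = s := by omega
      calc (s - 1) * (k - 1) + (k - 1) = (s - 1 + 1) * (k - 1) := by ring
      _ = v - 1 := by rw [h1, hs]
    have hvk : v - k = (s - 1) * (k - 1) := by omega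
    rw [hvk, show k * ((s - 1) * (k - 1)) = k * (s - 1) * (k - 1) by ring,
      Nat.mul_div_cancel _ (by omega : 0 < k - 1)]
  -- number of blocks through a point, as vertices
  have hTx : ∀ x : α,
      (Finset.univ.filter (fun y : {b : Finset α // b ∈ B} => x ∈ (y : Finset α))).card = s := by
    intro x
    rw [← hsall x]
    apply Finset.card_bij (fun (y : {b : Finset α // b ∈ B}) _ => (y : Finset α))
    · intro y hy
      simp only [Finset.mem_filter, Finset.mem_univ, true_and] at hy
      exact Finset.mem_filter.mpr ⟨y.2, hy⟩
    · intro y₁ h₁ y₂ h₂ h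
      exact Subtype.ext h
    · intro b hb
      simp only [Finset.mem_filter] at hb
      exact ⟨⟨b, hb.1⟩, by simp [hb.2], rfl⟩
  -- closed neighborhood cardinality
  have hNb : ∀ b : {b : Finset α // b ∈ B},
      (Finset.univ.filter (fun y => y = b ∨ (BIG 1 B).Adj b y)).card = k * (s - 1) + 1 := by
    intro b
    have hins : Finset.univ.filter (fun y => y = b ∨ (BIG 1 B).Adj b y)
        = insert b (Finset.univ.filter (fun y => (BIG 1 B).Adj b y)) := by
      ext y
      simp only [Finset.mem_filter, Finset.mem_univ, true_and, Finset.mem_insert]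
    have hbni : b ∉ Finset.univ.filter (fun y => (BIG 1 B).Adj b y) := by
      simp only [Finset.mem_filter, Finset.mem_univ, true_and]
      exact (BIG 1 B).loopless.irrefl b
    rw [hins, Finset.card_insert_of_notMem hbni]
    have hbiun : Finset.univ.filter (fun y => (BIG 1 B).Adj b y)
        = (b : Finset α).biUnion (fun x =>
            Finset.univ.filter (fun y : {b : Finset α // b ∈ B} => y ≠ b ∧ x ∈ (y : Finset α))) := by
      ext y
      simp only [Finset.mem_filter, Finset.mem_univ, true_and, Finset.mem_biUnion]
      constructor
      · intro hadj
        rw [hbigadj] at hadj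
        obtain ⟨hne, hc⟩ := hadj
        obtain ⟨x, hx⟩ := Finset.card_eq_one.mp hc
        have hxb : x ∈ (b : Finset α) ∩ (y : Finset α) := hx ▸ Finset.mem_singleton_self x
        rw [Finset.mem_inter] at hxb
        exact ⟨x, hxb.1, Ne.symm hne, hxb.2⟩
      · rintro ⟨x, hxb, hyne, hxy⟩
        rw [hbigadj]
        refine ⟨Ne.symm hyne, ?_⟩
        have hne' : (b : Finset α) ≠ (y : Finset α) := fun h => hyne (Subtype.ext h.symm)
        have h1 := hle1 (b : Finset α) b.2 (y : Finset α) y.2 hne'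
        have h2 : x ∈ (b : Finset α) ∩ (y : Finset α) := Finset.mem_inter.mpr ⟨hxb, hxy⟩
        have h3 : 0 < ((b : Finset α) ∩ (y : Finset α)).card := Finset.card_pos.mpr ⟨x, h2⟩
        omega
    have hdis2 : ∀ x ∈ (b : Finset α), ∀ x' ∈ (b : Finset α), x ≠ x' →
        Disjoint (Finset.univ.filter (fun y : {b : Finset α // b ∈ B} =>
          y ≠ b ∧ x ∈ (y : Finset α)))
        (Finset.univ.filter (fun y : {b : Finset α // b ∈ B} =>
          y ≠ b ∧ x' ∈ (y : Finset α))) := by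
      intro x hx x' hx' hne
      rw [Finset.disjoint_left]
      intro y hy hy'
      simp only [Finset.mem_filter, Finset.mem_univ, true_and] at hy hy'
      have hne' : (y : Finset α) ≠ (b : Finset α) := fun h => hy.1 (Subtype.ext h)
      have h1 := hle1 (y : Finset α) y.2 (b : Finset α) b.2 hne'
      have h2 : 1 < ((y : Finset α) ∩ (b : Finset α)).card := Finset.one_lt_card.mpr
        ⟨x, Finset.mem_inter.mpr ⟨hy.2, hx⟩, x', Finset.mem_inter.mpr ⟨hy'.2, hx'⟩, hne⟩
      omega
    rw [hbiun, Finset.card_biUnion hdis2]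
    have hpart : ∀ x ∈ (b : Finset α),
          (Finset.univ.filter (fun y : {b : Finset α // b ∈ B} =>
            y ≠ b ∧ x ∈ (y : Finset α))).card = s - 1 := by
        intro x hx
        have he : Finset.univ.filter (fun y : {b : Finset α // b ∈ B} =>
            y ≠ b ∧ x ∈ (y : Finset α))
            = (Finset.univ.filter (fun y : {b : Finset α // b ∈ B} =>
                x ∈ (y : Finset α))).erase b := by
          ext y
          simp only [Finset.mem_filter, Finset.mem_univ, true_and, Finset.mem_erase]
        rw [he, Finset.card_erase_of_mem (by simp [hx]), hTx x]
    rw [Finset.sum_congr rfl hpart, Finset.sum_const, smul_eq_mul, hblk (b : Finset α) b.2]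
  have hnks : s * (k - 1) = n * k := by omega
  have hx₀I : ∀ b ∈ I, x₀ ∉ (b : Finset α) := fun b hb hx => ((hcov x₀).mp ⟨b, hb, hx⟩) rfl
  -- every color appears exactly once on each closed neighborhood of a vertex of I
  have hone : ∀ b ∈ I, ∀ col : Fin (R + 1),
      ((Finset.univ.filter (fun y => y = b ∨ (BIG 1 B).Adj b y)).filter
        (fun y => c y = col)).card = 1 := by
    intro b hb
    have h1 : (Finset.univ.filter (fun y => y = b ∨ (BIG 1 B).Adj b y)).card
        = ∑ col : Fin (R + 1), ((Finset.univ.filter (fun y => y = b ∨ (BIG 1 B).Adj b y)).filter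
            (fun y => c y = col)).card :=
      Finset.card_eq_sum_card_fiberwise (fun y _ => Finset.mem_univ (c y))
    have hsum : ∑ col : Fin (R + 1), ((Finset.univ.filter
        (fun y => y = b ∨ (BIG 1 B).Adj b y)).filter (fun y => c y = col)).card
        = (Finset.univ : Finset (Fin (R + 1))).card := by
      rw [← h1, hNb b, Finset.card_univ, Fintype.card_fin, hr]
    intro col
    refine aux_all_one Finset.univ _ (fun col _ => ?_) hsum col (Finset.mem_univ col)
    obtain ⟨y, hy, hcy⟩ := hcrain b hb col
    exact Finset.card_pos.mpr ⟨y, Finset.mem_filter.mpr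
      ⟨Finset.mem_filter.mpr ⟨Finset.mem_univ y, hy⟩, hcy⟩⟩
  -- the closed-neighborhood degree of each vertex into I
  have hd : ∀ y : {b : Finset α // b ∈ B},
      (I.filter (fun b => y = b ∨ (BIG 1 B).Adj b y)).card
        + ((if y ∈ I then k - 1 else 0) + (if x₀ ∈ (y : Finset α) then 1 else 0)) = k := by
    intro y
    by_cases hyI : y ∈ I
    · have hfil : I.filter (fun b => y = b ∨ (BIG 1 B).Adj b y) = {y} := by
        ext b
        simp only [Finset.mem_filter, Finset.mem_singleton]
        constructor
        · rintro ⟨hbI, h | hadj⟩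
          · exact h.symm
          · exact absurd hadj (hIind b hbI y hyI)
        · rintro rfl
          exact ⟨hyI, Or.inl rfl⟩
      rw [hfil, Finset.card_singleton, if_pos hyI, if_neg (hx₀I y hyI)]
      omega
    · have hstep1 : (I.filter (fun b => y = b ∨ (BIG 1 B).Adj b y)).card
          = ∑ b ∈ I, ((y : Finset α) ∩ (b : Finset α)).card := by
        rw [Finset.card_filter]
        refine Finset.sum_congr rfl (fun b hb => ?_)
        have hne : y ≠ b := fun h => hyI (h ▸ hb)
        have hne' : (y : Finset α) ≠ (b : Finset α) := fun h => hne (Subtype.ext h)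
        have hub := hle1 _ y.2 _ b.2 hne'
        by_cases hadj : (BIG 1 B).Adj b y
        · rw [if_pos (Or.inr hadj)]
          obtain ⟨_, hcd⟩ := hadj
          rw [Finset.inter_comm] at hcd
          exact hcd.symm
        · rw [if_neg]
          · have hcc : ((y : Finset α) ∩ (b : Finset α)).card ≠ 1 := by
              intro h1
              exact hadj ⟨Ne.symm hne, by rwa [Finset.inter_comm]⟩
            omega
          · rintro (h | h)
            · exact hne h
            · exact hadj h
      have hstep2 : ∑ b ∈ I, ((y : Finset α) ∩ (b : Finset α)).card
          = ((y : Finset α).erase x₀).card := by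
        have hdisj : ∀ b₁ ∈ I, ∀ b₂ ∈ I, b₁ ≠ b₂ →
            Disjoint ((y : Finset α) ∩ (b₁ : Finset α)) ((y : Finset α) ∩ (b₂ : Finset α)) := by
          intro b₁ h₁ b₂ h₂ hne
          rw [Finset.disjoint_left]
          intro z hz hz'
          rw [Finset.mem_inter] at hz hz'
          have : z ∈ ((b₁ : {b : Finset α // b ∈ B}) : Finset α) ∩ (b₂ : Finset α) :=
            Finset.mem_inter.mpr ⟨hz.2, hz'.2⟩
          rw [hIdisj b₁ h₁ b₂ h₂ hne] at this
          exact absurd this (Finset.notMem_empty z)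
        have hun : (y : Finset α).erase x₀
            = I.biUnion (fun b => (y : Finset α) ∩ (b : Finset α)) := by
          ext z
          simp only [Finset.mem_erase, Finset.mem_biUnion, Finset.mem_inter]
          constructor
          · rintro ⟨hzx, hzy⟩
            obtain ⟨b, hb, hzb⟩ := (hcov z).mpr hzx
            exact ⟨b, hb, hzy, hzb⟩
          · rintro ⟨b, hb, hzy, hzb⟩
            exact ⟨(hcov z).mp ⟨b, hb, hzb⟩, hzy⟩
        rw [hun, Finset.card_biUnion hdisj]
      by_cases hx₀y : x₀ ∈ (y : Finset α)
      · rw [hstep1, hstep2, if_neg hyI, if_pos hx₀y, Finset.card_erase_of_mem hx₀y,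
          hblk _ y.2]
        omega
      · rw [hstep1, hstep2, if_neg hyI, if_neg hx₀y, Finset.erase_eq_of_notMem hx₀y,
          hblk _ y.2]
        omega
  -- color class data
  set a : Fin (R + 1) → ℕ := fun col => (I.filter (fun y => c y = col)).card with ha
  set t : Fin (R + 1) → ℕ := fun col =>
    ((Finset.univ.filter (fun y : {b : Finset α // b ∈ B} => x₀ ∈ (y : Finset α))).filter
      (fun y => c y = col)).card with ht
  -- key per-color identity
  have hkey : ∀ col : Fin (R + 1),
      k * ((Finset.univ.filter (fun y : {b : Finset α // b ∈ B} => c y = col)).card)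
        = n + ((k - 1) * a col + t col) := by
    intro col
    set S := Finset.univ.filter (fun y : {b : Finset α // b ∈ B} => c y = col) with hS
    have h1 : ∑ y ∈ S, ((I.filter (fun b => y = b ∨ (BIG 1 B).Adj b y)).card
        + ((if y ∈ I then k - 1 else 0) + (if x₀ ∈ (y : Finset α) then 1 else 0)))
        = ∑ _y ∈ S, k := Finset.sum_congr rfl (fun y _ => hd y)
    rw [Finset.sum_add_distrib, Finset.sum_add_distrib] at h1
    have hA : ∑ y ∈ S, (I.filter (fun b => y = b ∨ (BIG 1 B).Adj b y)).card = n := by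
      rw [← aux_sum_card_filter_comm I S (fun b y => y = b ∨ (BIG 1 B).Adj b y)]
      have heach : ∀ b ∈ I, (S.filter (fun y => y = b ∨ (BIG 1 B).Adj b y)).card = 1 := by
        intro b hb
        rw [hS, Finset.filter_comm]
        exact hone b hb col
      rw [Finset.sum_congr rfl heach, Finset.sum_const, smul_eq_mul, mul_one, hIn]
    have hB1 : ∑ y ∈ S, (if y ∈ I then k - 1 else 0) = (k - 1) * a col := by
      rw [Finset.sum_ite_mem, Finset.sum_const, smul_eq_mul]
      have hinter : S ∩ I = I.filter (fun y => c y = col) := by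
        ext z
        simp only [hS, Finset.mem_inter, Finset.mem_filter, Finset.mem_univ, true_and]
        tauto
      rw [hinter, ha, mul_comm]
    have hB2 : ∑ y ∈ S, (if x₀ ∈ (y : Finset α) then 1 else 0) = t col := by
      rw [← Finset.card_filter, hS, Finset.filter_comm, ht]
    rw [hA, hB1, hB2, Finset.sum_const, smul_eq_mul] at h1
    rw [mul_comm]
    exact h1.symm
  have hsa : ∑ col : Fin (R + 1), a col = n := by
    rw [ha, ← hIn]
    exact (Finset.card_eq_sum_card_fiberwise (fun y _ => Finset.mem_univ (c y))).symm
  have hst : ∑ col : Fin (R + 1), t col = s := by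
    rw [ht, ← hTx x₀]
    exact (Finset.card_eq_sum_card_fiberwise (fun y _ => Finset.mem_univ (c y))).symm
  have ht1 : ∀ col, t col ≤ 1 := by
    intro col
    rw [ht]
    apply Finset.card_le_one.mpr
    intro y hy z hz
    simp only [Finset.mem_filter, Finset.mem_univ, true_and] at hy hz
    by_contra hne
    have hne' : (y : Finset α) ≠ (z : Finset α) := fun h => hne (Subtype.ext h)
    have hadj : (BIG 1 B).Adj y z := by
      refine ⟨hne, ?_⟩
      have hub := hle1 _ y.2 _ z.2 hne'
      have hmem : x₀ ∈ (y : Finset α) ∩ (z : Finset α) := Finset.mem_inter.mpr ⟨hy.1, hz.1⟩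
      have := Finset.card_pos.mpr ⟨x₀, hmem⟩
      omega
    exact hcprop y z hadj (hy.2.trans hz.2.symm)
  have hub : ∀ G : Finset (Fin (R + 1)), (∀ col ∈ G, 1 ≤ a col) → G.card ≤ n := by
    intro G hG
    calc G.card = ∑ _col ∈ G, 1 := by simp
    _ ≤ ∑ col ∈ G, a col := Finset.sum_le_sum hG
    _ ≤ ∑ col : Fin (R + 1), a col := Finset.sum_le_sum_of_subset (Finset.subset_univ G)
    _ = n := hsa
  set F₁ := (Finset.univ : Finset (Fin (R + 1))).filter (fun col => t col = 1) with hF₁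
  have hF₁card : F₁.card = s := by
    have h1 := Finset.sum_filter_add_sum_filter_not (Finset.univ : Finset (Fin (R + 1)))
      (fun col => t col = 1) t
    have h2 : ∑ col ∈ F₁, t col = F₁.card := by
      rw [Finset.sum_congr rfl (fun col hc => (Finset.mem_filter.mp hc).2)]
      simp
      rfl
    have h3 : ∑ col ∈ (Finset.univ : Finset (Fin (R + 1))).filter (fun col => ¬ t col = 1),
        t col = 0 := by
      apply Finset.sum_eq_zero
      intro col hc
      have hl := ht1 col
      have := (Finset.mem_filter.mp hc).2
      omega
    rw [hst] at h1
    rw [← hF₁] at h1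
    omega
  by_cases hkn : k ∣ n
  · have hge : ∀ col ∈ F₁, 1 ≤ a col := by
      intro col hcol
      have htc : t col = 1 := (Finset.mem_filter.mp hcol).2
      by_contra h
      have ha0 : a col = 0 := by omega
      have hkc := hkey col
      rw [ha0, htc] at hkc
      simp only [Nat.mul_zero, Nat.zero_add] at hkc
      have hdvd : k ∣ n + 1 := ⟨_, hkc.symm⟩
      have h1 : k ∣ 1 := by
        have := Nat.dvd_sub hdvd hkn
        simpa using this
      have := Nat.le_of_dvd one_pos h1
      omega
    have := hub F₁ hge
    rw [hF₁card] at this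
    omega
  · have hge : ∀ col ∈ (Finset.univ : Finset (Fin (R + 1))) \ F₁, 1 ≤ a col := by
      intro col hcol
      have ht0 : t col = 0 := by
        have h1 := ht1 col
        have h2 : col ∉ F₁ := (Finset.mem_sdiff.mp hcol).2
        rw [hF₁, Finset.mem_filter] at h2
        push_neg at h2
        have := h2 (Finset.mem_univ col)
        omega
      by_contra h
      have ha0 : a col = 0 := by omega
      have hkc := hkey col
      rw [ha0, ht0] at hkc
      simp only [Nat.mul_zero, Nat.zero_add, Nat.add_zero] at hkc
      exact hkn ⟨_, hkc.symm⟩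
    have h1 := hub _ hge
    have h2 : ((Finset.univ : Finset (Fin (R + 1))) \ F₁).card = (R + 1) - s := by
      rw [Finset.card_sdiff_of_subset (Finset.filter_subset _ _), Finset.card_univ, Fintype.card_fin,
        hF₁card]
    have h3 : n + s ≤ k * (s - 1) := aux_arith n s k hk hn2 hs1 hnks
    rw [h2] at h1
    rw [hr] at h1
    omega
end
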